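/- Let f be a positive C² function on (0,l) with f′(θ)f″(θ) ≠ 0 satisfying (f′(θ))² − f(θ)f″(θ) = μ for a constant μ and all θ ∈ (0,l). Suppose f″ < 0 and f′ > 0 on (0,l). Let θ_1,…,θ_n, ψ_1,…,ψ_n ∈ (0,l) satisfy ∑ θ_i = ∑ ψ_i = ml with 0 < m < n. Then 2 ∑_{i=1}^n f(θ_i) f′(ψ_i) ≥ ∑_{i=1}^n f(θ_i) f′(θ_i) + ∑_{i=1}^n f(ψ_i) f′(ψ_i), with equality if and only if θ_i = ψ_i for all i. -/

import Mathlib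

open Set

private lemma stmt13_key (l μ : ℝ)
    (f f' f'' : ℝ → ℝ)
    (hderiv : ∀ x ∈ Set.Ioo (0:ℝ) l, HasDerivAt f (f' x) x)
    (hderiv2 : ∀ x ∈ Set.Ioo (0:ℝ) l, HasDerivAt f' (f'' x) x)
    (hμ : ∀ x ∈ Set.Ioo (0:ℝ) l, (f' x) ^ 2 - f x * f'' x = μ)
    (hf'' : ∀ x ∈ Set.Ioo (0:ℝ) l, f'' x < 0)
    (hf' : ∀ x ∈ Set.Ioo (0:ℝ) l, 0 < f' x)
    (a b : ℝ) (ha : a ∈ Set.Ioo (0:ℝ) l) (hb : b ∈ Set.Ioo (0:ℝ) l) (hab : a ≠ b) :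
    μ * (a - b) < 2 * f a * f' b - f a * f' a - f b * f' b := by
  -- f is strictly monotone on Ioo 0 l
  have hmono : StrictMonoOn f (Set.Ioo (0:ℝ) l) := by
    apply strictMonoOn_of_deriv_pos (convex_Ioo 0 l)
      (fun x hx => (hderiv x hx).continuousAt.continuousWithinAt)
    intro x hx
    rw [isOpen_Ioo.interior_eq] at hx
    rw [(hderiv x hx).deriv]
    exact hf' x hx
  set g : ℝ → ℝ := fun y => 2 * f a * f' y - f y * f' y + μ * y with hg_def
  have hg : ∀ x ∈ Set.Ioo (0:ℝ) l, HasDerivAt g (2 * f'' x * (f a - f x)) x := by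
    intro x hx
    have h1 := ((hderiv2 x hx).const_mul (2 * f a)).sub
      ((hderiv x hx).mul (hderiv2 x hx))
    have h2 := h1.add ((hasDerivAt_id x).const_mul μ)
    exact h2.congr_deriv (by linear_combination (-1 : ℝ) * hμ x hx)
  have hcg : ContinuousOn g (Set.Ioo (0:ℝ) l) :=
    fun x hx => (hg x hx).continuousAt.continuousWithinAt
  -- g b > g a
  have hgba : g a < g b := by
    rcases lt_or_gt_of_ne hab with h | h
    · -- a < b : g strictly mono on Ico a l
      have hsub : Set.Ico a l ⊆ Set.Ioo 0 l := fun x hx => ⟨lt_of_lt_of_le ha.1 hx.1, hx.2⟩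
      have : StrictMonoOn g (Set.Ico a l) := by
        apply strictMonoOn_of_deriv_pos (convex_Ico a l) (hcg.mono hsub)
        intro x hx
        rw [interior_Ico] at hx
        have hx' : x ∈ Set.Ioo (0:ℝ) l := ⟨lt_trans ha.1 hx.1, hx.2⟩
        rw [(hg x hx').deriv]
        have h1 : f a < f x := hmono ha hx' hx.1
        have h2 : f'' x < 0 := hf'' x hx'
        nlinarith
      exact this ⟨le_refl a, ha.2⟩ ⟨le_of_lt h, hb.2⟩ h
    · -- b < a : g strictly anti on Ioc 0 a
      have hsub : Set.Ioc 0 a ⊆ Set.Ioo 0 l := fun x hx => ⟨hx.1, lt_of_le_of_lt hx.2 ha.2⟩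
      have : StrictAntiOn g (Set.Ioc 0 a) := by
        apply strictAntiOn_of_deriv_neg (convex_Ioc 0 a) (hcg.mono hsub)
        intro x hx
        rw [interior_Ioc] at hx
        have hx' : x ∈ Set.Ioo (0:ℝ) l := ⟨hx.1, lt_trans hx.2 ha.2⟩
        rw [(hg x hx').deriv]
        have h1 : f x < f a := hmono hx' ha hx.2
        have h2 : f'' x < 0 := hf'' x hx'
        nlinarith
      exact this ⟨hb.1, le_of_lt h⟩ ⟨ha.1, le_refl a⟩ h
  simp only [hg_def] at hgba
  linarith

theorem stmt13 (n : ℕ) (hn : 2 ≤ n) (l m μ : ℝ) (hl : 0 < l) (hm0 : 0 < m) (hmn : m < n)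
    (f f' f'' : ℝ → ℝ)
    (hderiv : ∀ x ∈ Set.Ioo (0:ℝ) l, HasDerivAt f (f' x) x)
    (hderiv2 : ∀ x ∈ Set.Ioo (0:ℝ) l, HasDerivAt f' (f'' x) x)
    (hcont : ContinuousOn f'' (Set.Ioo (0:ℝ) l))
    (hpos : ∀ x ∈ Set.Ioo (0:ℝ) l, 0 < f x)
    (hne : ∀ x ∈ Set.Ioo (0:ℝ) l, f' x * f'' x ≠ 0)
    (hμ : ∀ x ∈ Set.Ioo (0:ℝ) l, (f' x) ^ 2 - f x * f'' x = μ)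
    (hf'' : ∀ x ∈ Set.Ioo (0:ℝ) l, f'' x < 0)
    (hf' : ∀ x ∈ Set.Ioo (0:ℝ) l, 0 < f' x)
    (θ ψ : Fin n → ℝ)
    (hθ : ∀ i, θ i ∈ Set.Ioo (0:ℝ) l) (hψ : ∀ i, ψ i ∈ Set.Ioo (0:ℝ) l)
    (hsumθ : ∑ i, θ i = m * l) (hsumψ : ∑ i, ψ i = m * l) :
    (∑ i, f (θ i) * f' (θ i)) + (∑ i, f (ψ i) * f' (ψ i))
      ≤ 2 * ∑ i, f (θ i) * f' (ψ i)
    ∧ (2 * ∑ i, f (θ i) * f' (ψ i)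
        = (∑ i, f (θ i) * f' (θ i)) + (∑ i, f (ψ i) * f' (ψ i))
      ↔ ∀ i, θ i = ψ i) := by
  have key : ∀ i : Fin n, μ * (θ i - ψ i)
      ≤ 2 * f (θ i) * f' (ψ i) - f (θ i) * f' (θ i) - f (ψ i) * f' (ψ i) := by
    intro i
    rcases eq_or_ne (θ i) (ψ i) with h | h
    · rw [h]; ring_nf; rfl
    · exact le_of_lt (stmt13_key l μ f f' f'' hderiv hderiv2 hμ hf'' hf'
        (θ i) (ψ i) (hθ i) (hψ i) h)
  have hsum0 : ∑ i : Fin n, μ * (θ i - ψ i) = 0 := by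
    rw [← Finset.mul_sum, Finset.sum_sub_distrib, hsumθ, hsumψ]
    ring
  have hexpand : ∑ i : Fin n,
      (2 * f (θ i) * f' (ψ i) - f (θ i) * f' (θ i) - f (ψ i) * f' (ψ i))
      = 2 * (∑ i, f (θ i) * f' (ψ i)) - (∑ i, f (θ i) * f' (θ i))
        - (∑ i, f (ψ i) * f' (ψ i)) := by
    rw [Finset.sum_sub_distrib, Finset.sum_sub_distrib, Finset.mul_sum]
    congr 2
    exact Finset.sum_congr rfl fun i _ => by ring
  have hle : (0:ℝ) ≤ 2 * (∑ i, f (θ i) * f' (ψ i)) - (∑ i, f (θ i) * f' (θ i))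
      - (∑ i, f (ψ i) * f' (ψ i)) := by
    rw [← hexpand, ← hsum0]
    exact Finset.sum_le_sum fun i _ => key i
  constructor
  · linarith
  · constructor
    · intro heq i
      by_contra hne'
      have hstrict : ∑ i : Fin n, μ * (θ i - ψ i)
          < ∑ i : Fin n, (2 * f (θ i) * f' (ψ i) - f (θ i) * f' (θ i)
            - f (ψ i) * f' (ψ i)) := by
        apply Finset.sum_lt_sum (fun j _ => key j)
        exact ⟨i, Finset.mem_univ i, stmt13_key l μ f f' f'' hderiv hderiv2 hμ hf'' hf'
          (θ i) (ψ i) (hθ i) (hψ i) hne'⟩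
      rw [hsum0, hexpand] at hstrict
      linarith
    · intro h
      have h1 : ∑ i, f (θ i) * f' (ψ i) = ∑ i, f (θ i) * f' (θ i) := by
        apply Finset.sum_congr rfl
        intro i _
        rw [h i]
      have h2 : ∑ i, f (ψ i) * f' (ψ i) = ∑ i, f (θ i) * f' (θ i) := by
        apply Finset.sum_congr rfl
        intro i _
        rw [h i]
      rw [h1, h2]
      ring
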